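/- The DRND statistic is an unbiased estimator of the reciprocal visit count: E[y_n] = 1/n. -/

import Mathlib

open MeasureTheory ProbabilityTheory Finset

open MeasureTheory ProbabilityTheory Finset Real Set
open scoped NNReal ENNReal

namespace DRNDaux

variable {v : ℝ≥0}

lemma pdf_zero_eq (v : ℝ≥0) (x : ℝ) :
    gaussianPDFReal 0 v x = (√(2 * π * v))⁻¹ * rexp (-(2 * (v:ℝ))⁻¹ * x ^ 2) := by
  rw [gaussianPDFReal]
  congr 1
  rw [sub_zero]
  congr 1
  by_cases hv : (v:ℝ) = 0
  · simp [hv]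
  · field_simp

lemma integral_gaussianReal_eq (m : ℝ) (hv : v ≠ 0) (g : ℝ → ℝ) :
    ∫ x, g x ∂(gaussianReal m v) = ∫ x, gaussianPDFReal m v x * g x := by
  rw [gaussianReal_of_var_ne_zero _ hv]
  have h : gaussianPDF m v = fun x => ((gaussianPDFReal m v x).toNNReal : ℝ≥0∞) := rfl
  rw [h, integral_withDensity_eq_integral_smul
    ((measurable_gaussianPDFReal m v).real_toNNReal) g]
  refine integral_congr_ae (ae_of_all _ fun x => ?_)
  simp [NNReal.smul_def, Real.coe_toNNReal _ (gaussianPDFReal_nonneg m v x)]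

lemma integrable_gaussianReal_iff (m : ℝ) (hv : v ≠ 0) {g : ℝ → ℝ}
    (hg : Measurable g) :
    Integrable g (gaussianReal m v) ↔
      Integrable (fun x => gaussianPDFReal m v x * g x) volume := by
  rw [gaussianReal_of_var_ne_zero _ hv]
  have h : gaussianPDF m v = fun x => ((gaussianPDFReal m v x).toNNReal : ℝ≥0∞) := rfl
  rw [h, integrable_withDensity_iff_integrable_smul
    ((measurable_gaussianPDFReal m v).real_toNNReal)]
  constructor <;> intro h' <;> refine h'.congr (ae_of_all _ fun x => ?_) <;>
    simp [NNReal.smul_def, Real.coe_toNNReal _ (gaussianPDFReal_nonneg m v x)]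

lemma vpos (hv : v ≠ 0) : 0 < (v:ℝ) := by
  exact_mod_cast lt_of_le_of_ne zero_le (Ne.symm hv)

lemma b_pos (hv : v ≠ 0) : 0 < (2 * (v:ℝ))⁻¹ := by
  have := vpos hv; positivity

lemma pdf_even (v : ℝ≥0) (x : ℝ) : gaussianPDFReal 0 v (-x) = gaussianPDFReal 0 v x := by
  simp [gaussianPDFReal]

lemma integrable_pdf_mul_id (hv : v ≠ 0) :
    Integrable (fun x => gaussianPDFReal 0 v x * x) volume := by
  have h := (integrable_mul_exp_neg_mul_sq (b_pos hv)).const_mul (√(2 * π * v))⁻¹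
  refine h.congr (ae_of_all _ fun x => ?_)
  simp only [pdf_zero_eq]; ring

lemma integrable_pdf_mul_sq (hv : v ≠ 0) :
    Integrable (fun x => gaussianPDFReal 0 v x * x ^ 2) volume := by
  have h := (integrable_rpow_mul_exp_neg_mul_sq (b_pos hv)
    (by norm_num : (-1:ℝ) < 2)).const_mul (√(2 * π * v))⁻¹
  refine h.congr (ae_of_all _ fun x => ?_)
  simp only [pdf_zero_eq]
  rw [show ((2:ℝ) : ℝ) = ((2:ℕ) : ℝ) by norm_num, rpow_natCast]
  ring

lemma I1 (v : ℝ≥0) : ∫ x, gaussianPDFReal 0 v x * x = 0 := by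
  have h := integral_neg_eq_self (fun x => gaussianPDFReal 0 v x * x) (volume : Measure ℝ)
  simp only [pdf_even, mul_neg] at h
  rw [integral_neg] at h
  linarith

lemma I2 (hv : v ≠ 0) : ∫ x, gaussianPDFReal 0 v x * x ^ 2 = v := by
  have hb := b_pos hv
  have hvp := vpos hv
  have key : ∫ x : ℝ, x ^ 2 * rexp (-(2 * (v:ℝ))⁻¹ * x ^ 2)
      = ((2 * (v:ℝ))⁻¹) ^ (-(3:ℝ)/2) * ((1/2) * √π) := by
    have habs := _root_.integral_comp_abs
      (f := fun x : ℝ => x ^ 2 * rexp (-(2 * (v:ℝ))⁻¹ * x ^ 2))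
    have h1 : ∀ x : ℝ, |x| ^ 2 * rexp (-(2 * (v:ℝ))⁻¹ * |x| ^ 2)
        = x ^ 2 * rexp (-(2 * (v:ℝ))⁻¹ * x ^ 2) := fun x => by rw [sq_abs]
    simp only [h1] at habs
    rw [habs]
    have h2 : ∫ x in Ioi (0:ℝ), x ^ (2:ℕ) * rexp (-(2 * (v:ℝ))⁻¹ * x ^ (2:ℕ))
        = ((2 * (v:ℝ))⁻¹) ^ (-(2+1:ℝ)/2) * (1/2) * Real.Gamma ((2+1)/2) := by
      rw [← integral_rpow_mul_exp_neg_mul_rpow (by norm_num : (0:ℝ) < 2)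
        (by norm_num : (-1:ℝ) < 2) hb]
      refine setIntegral_congr_fun measurableSet_Ioi fun x hx => ?_
      rw [show ((2:ℝ) : ℝ) = ((2:ℕ) : ℝ) by norm_num, rpow_natCast]
    have hg : Real.Gamma ((2+1)/2) = (1/2) * √π := by
      rw [show ((2:ℝ)+1)/2 = 1/2 + 1 by norm_num, Real.Gamma_add_one (by norm_num),
        Real.Gamma_one_half_eq]
    rw [h2, hg]
    ring_nf
  calc ∫ x, gaussianPDFReal 0 v x * x ^ 2
      = (√(2 * π * v))⁻¹ * ∫ x : ℝ, x ^ 2 * rexp (-(2 * (v:ℝ))⁻¹ * x ^ 2) := by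
        rw [← integral_const_mul]
        congr 1; ext x; rw [pdf_zero_eq]; ring
    _ = (v:ℝ) := by
        rw [key]
        have h3 : ((2 * (v:ℝ))⁻¹) ^ (-(3:ℝ)/2) = (2 * (v:ℝ)) ^ ((3:ℝ)/2) := by
          rw [show (-(3:ℝ)/2) = -((3:ℝ)/2) by norm_num,
            rpow_neg (by positivity), inv_rpow (by positivity), inv_inv]
        have h4 : (2 * (v:ℝ)) ^ ((3:ℝ)/2) = (2 * (v:ℝ)) * √(2 * (v:ℝ)) := by
          rw [show (3:ℝ)/2 = 1 + 1/2 by norm_num, rpow_add (by positivity), rpow_one,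
            ← Real.sqrt_eq_rpow]
        have h5 : √(2 * π * (v:ℝ)) = √(2 * (v:ℝ)) * √π := by
          rw [← Real.sqrt_mul (by positivity)]
          congr 1; ring
        rw [h3, h4, h5]
        have hs1 : (0:ℝ) < √(2 * (v:ℝ)) := Real.sqrt_pos.mpr (by positivity)
        have hs2 : (0:ℝ) < √π := Real.sqrt_pos.mpr pi_pos
        field_simp


lemma pdf_shift_integral (m : ℝ) (v : ℝ≥0) (g : ℝ → ℝ) :
    ∫ x, gaussianPDFReal m v x * g x = ∫ x, gaussianPDFReal 0 v x * g (x + m) := by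
  rw [← integral_add_right_eq_self (fun x => gaussianPDFReal m v x * g x) m]
  congr 1
  ext x
  rw [gaussianPDFReal_add]
  simp

lemma integral_id_gaussianReal (m : ℝ) (hv : v ≠ 0) :
    ∫ x, x ∂(gaussianReal m v) = m := by
  rw [integral_gaussianReal_eq m hv, pdf_shift_integral m v (fun x => x)]
  have heq : ∀ x : ℝ, gaussianPDFReal 0 v x * (x + m)
      = gaussianPDFReal 0 v x * x + m * gaussianPDFReal 0 v x := fun x => by ring
  rw [integral_congr_ae (ae_of_all _ heq),
    integral_add (integrable_pdf_mul_id hv) ((integrable_gaussianPDFReal 0 v).const_mul m),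
    I1, integral_const_mul, integral_gaussianPDFReal_eq_one 0 hv]
  ring

lemma integral_sq_gaussianReal (m : ℝ) (hv : v ≠ 0) :
    ∫ x, x ^ 2 ∂(gaussianReal m v) = v + m ^ 2 := by
  rw [integral_gaussianReal_eq m hv, pdf_shift_integral m v (fun x => x ^ 2)]
  have heq : ∀ x : ℝ, gaussianPDFReal 0 v x * (x + m) ^ 2
      = gaussianPDFReal 0 v x * x ^ 2 + ((2 * m) * (gaussianPDFReal 0 v x * x)
        + m ^ 2 * gaussianPDFReal 0 v x) := fun x => by ring
  have hg2 : Integrable (fun x => (2 * m) * (gaussianPDFReal 0 v x * x)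
      + m ^ 2 * gaussianPDFReal 0 v x) volume :=
    ((integrable_pdf_mul_id hv).const_mul (2 * m)).add
      ((integrable_gaussianPDFReal 0 v).const_mul (m ^ 2))
  rw [integral_congr_ae (ae_of_all _ heq),
    integral_add (integrable_pdf_mul_sq hv) hg2,
    integral_add ((integrable_pdf_mul_id hv).const_mul (2 * m))
      ((integrable_gaussianPDFReal 0 v).const_mul (m ^ 2)),
    I2 hv, integral_const_mul, integral_const_mul, I1,
    integral_gaussianPDFReal_eq_one 0 hv]
  ring

lemma integrable_id_gaussianReal (m : ℝ) (hv : v ≠ 0) :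
    Integrable (fun x : ℝ => x) (gaussianReal m v) := by
  rw [integrable_gaussianReal_iff m hv (g := fun x => x) measurable_id]
  have h : Integrable (fun x => gaussianPDFReal 0 v x * (x + m)) volume := by
    have heq : ∀ x : ℝ, gaussianPDFReal 0 v x * (x + m)
        = gaussianPDFReal 0 v x * x + m * gaussianPDFReal 0 v x := fun x => by ring
    exact ((integrable_pdf_mul_id hv).add
      ((integrable_gaussianPDFReal 0 v).const_mul m)).congr
      (ae_of_all _ fun x => (heq x).symm)
  refine (h.comp_sub_right m).congr (ae_of_all _ fun x => ?_)
  simp only [gaussianPDFReal_sub, zero_add, sub_add_cancel]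

lemma integrable_sq_gaussianReal (m : ℝ) (hv : v ≠ 0) :
    Integrable (fun x : ℝ => x ^ 2) (gaussianReal m v) := by
  rw [integrable_gaussianReal_iff m hv (g := fun x => x ^ 2) (measurable_id.pow_const 2)]
  have h : Integrable (fun x => gaussianPDFReal 0 v x * (x + m) ^ 2) volume := by
    have heq : ∀ x : ℝ, gaussianPDFReal 0 v x * (x + m) ^ 2
        = gaussianPDFReal 0 v x * x ^ 2 + ((2 * m) * (gaussianPDFReal 0 v x * x)
          + m ^ 2 * gaussianPDFReal 0 v x) := fun x => by ring
    exact ((integrable_pdf_mul_sq hv).add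
      (((integrable_pdf_mul_id hv).const_mul (2 * m)).add
        ((integrable_gaussianPDFReal 0 v).const_mul (m ^ 2)))).congr
      (ae_of_all _ fun x => (heq x).symm)
  refine (h.comp_sub_right m).congr (ae_of_all _ fun x => ?_)
  simp only [gaussianPDFReal_sub, zero_add, sub_add_cancel]

end DRNDaux

/-- The DRND statistic is an unbiased estimator of the reciprocal visit count:
`E[y_n] = 1/n`, where `y_n = (f̄² − μ²)/σ²` and `f̄` is the sample mean of `n`
i.i.d. Gaussian `N(μ, σ²)` random variables. -/
theorem drnd_unbiased
    {Ω : Type*} [MeasurableSpace Ω] (P : Measure Ω) [IsProbabilityMeasure P]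
    (n : ℕ) (hn : 0 < n) (μ σ : ℝ) (hσ : 0 < σ)
    (f : Fin n → Ω → ℝ) (hmeas : ∀ i, Measurable (f i))
    (hindep : iIndepFun f P)
    (hdist : ∀ i, Measure.map (f i) P = gaussianReal μ ⟨σ ^ 2, sq_nonneg σ⟩) :
    ∫ ω, (((∑ i, f i ω) / n) ^ 2 - μ ^ 2) / σ ^ 2 ∂P = 1 / n := by
  set v : ℝ≥0 := ⟨σ ^ 2, sq_nonneg σ⟩ with hvdef
  have hv : v ≠ 0 := by
    intro h
    have h2 : (v : ℝ) = 0 := by rw [h]; simp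
    have h3 : σ ^ 2 = 0 := h2
    nlinarith
  have hvσ : (v : ℝ) = σ ^ 2 := rfl
  have hn' : (n : ℝ) ≠ 0 := Nat.cast_ne_zero.mpr hn.ne'
  have hσ' : σ ^ 2 ≠ 0 := by positivity
  have hInt1 : ∀ i, Integrable (f i) P := fun i => by
    have h := DRNDaux.integrable_id_gaussianReal μ hv
    rw [← hdist i] at h
    exact (integrable_map_measure aestronglyMeasurable_id (hmeas i).aemeasurable).mp h
  have hInt2 : ∀ i, Integrable (fun ω => f i ω ^ 2) P := fun i => by
    have h := DRNDaux.integrable_sq_gaussianReal μ hv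
    rw [← hdist i] at h
    exact (integrable_map_measure
      ((measurable_id.pow_const 2).aestronglyMeasurable) (hmeas i).aemeasurable).mp h
  have hE1 : ∀ i, ∫ ω, f i ω ∂P = μ := fun i => by
    have h2 : ∫ ω, f i ω ∂P = ∫ x, x ∂(gaussianReal μ v) := by
      rw [← hdist i]
      exact (integral_map (hmeas i).aemeasurable aestronglyMeasurable_id).symm
    rw [h2, DRNDaux.integral_id_gaussianReal μ hv]
  have hE2 : ∀ i, ∫ ω, f i ω ^ 2 ∂P = σ ^ 2 + μ ^ 2 := fun i => by
    have h2 : ∫ ω, f i ω ^ 2 ∂P = ∫ x, x ^ 2 ∂(gaussianReal μ v) := by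
      rw [← hdist i]
      exact (integral_map (hmeas i).aemeasurable
        (measurable_id.pow_const 2).aestronglyMeasurable).symm
    rw [h2, DRNDaux.integral_sq_gaussianReal μ hv, hvσ]
  have hIntMul : ∀ i j, Integrable (fun ω => f i ω * f j ω) P := fun i j => by
    by_cases hij : i = j
    · subst hij
      exact (hInt2 i).congr (ae_of_all _ fun ω => by simpa using sq (f i ω))
    · exact ((hindep.indepFun hij).integrable_mul (hInt1 i) (hInt1 j)).congr
        (ae_of_all _ fun ω => rfl)
  have hEMul : ∀ i j, i ≠ j → ∫ ω, f i ω * f j ω ∂P = μ * μ := fun i j hij => by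
    have h := (hindep.indepFun hij).integral_fun_mul_eq_mul_integral (hInt1 i).1 (hInt1 j).1
    rw [hE1 i, hE1 j] at h
    exact h
  have hsum : ∀ ω, (∑ i, f i ω) ^ 2 = ∑ i, ∑ j, f i ω * f j ω := fun ω => by
    rw [sq, Finset.sum_mul_sum]
  have hIntS : Integrable (fun ω => ∑ i, ∑ j, f i ω * f j ω) P :=
    integrable_finset_sum _ fun i _ => integrable_finset_sum _ fun j _ => hIntMul i j
  have hIntS2 : Integrable (fun ω => (∑ i, f i ω) ^ 2) P :=
    hIntS.congr (ae_of_all _ fun ω => (hsum ω).symm)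
  have hES : ∫ ω, (∑ i, f i ω) ^ 2 ∂P = n * σ ^ 2 + n ^ 2 * μ ^ 2 := by
    calc ∫ ω, (∑ i, f i ω) ^ 2 ∂P = ∫ ω, ∑ i, ∑ j, f i ω * f j ω ∂P :=
          integral_congr_ae (ae_of_all _ hsum)
      _ = ∑ i, ∑ j, ∫ ω, f i ω * f j ω ∂P := by
          rw [integral_finset_sum _
            (fun i _ => integrable_finset_sum _ fun j _ => hIntMul i j)]
          exact Finset.sum_congr rfl fun i _ =>
            integral_finset_sum _ fun j _ => hIntMul i j
      _ = ∑ i : Fin n, ∑ j : Fin n, ((if i = j then σ ^ 2 else 0) + μ * μ) := by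
          refine Finset.sum_congr rfl fun i _ => Finset.sum_congr rfl fun j _ => ?_
          by_cases hij : i = j
          · subst hij
            rw [integral_congr_ae
              (ae_of_all _ fun ω => by simpa using (sq (f i ω)).symm : _), hE2 i]
            simp
            ring
          · rw [hEMul i j hij]
            simp [hij]
      _ = n * σ ^ 2 + n ^ 2 * μ ^ 2 := by
          simp [Finset.sum_add_distrib, Finset.sum_ite_eq, Finset.sum_const,
            Finset.card_univ, nsmul_eq_mul]
          ring
  have key : ∀ ω, (((∑ i, f i ω) / n) ^ 2 - μ ^ 2) / σ ^ 2
      = ((n : ℝ) ^ 2 * σ ^ 2)⁻¹ * (∑ i, f i ω) ^ 2 - μ ^ 2 / σ ^ 2 := fun ω => by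
    field_simp
  rw [integral_congr_ae (ae_of_all _ key),
    integral_sub (hIntS2.const_mul _) (integrable_const _),
    integral_const_mul, hES, integral_const]
  simp only [measure_univ, probReal_univ, ENNReal.toReal_one, smul_eq_mul, one_mul]
  field_simp
  ring
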